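/- Let 0 < p < 1 and 0 ≤ ã ≤ a ≤ p with a - ã ≤ 1/n (n ≥ 2). Then KL(ã‖p) - KL(a‖p) ≤ (1/n)·max(0, log₂(p/(1-p))) + (2/n)·log₂ n. -/

import Mathlib

/-- Binary KL divergence in bits: KL(a‖p) (conventions 0·log 0 = 0 hold since Real.log 0 = 0). -/
noncomputable def klB (a p : ℝ) : ℝ :=
  a * Real.logb 2 (a / p) + (1 - a) * Real.logb 2 ((1 - a) / (1 - p))

/-- P(Bin(n,p) = k). -/
noncomputable def binPMF (n k : ℕ) (p : ℝ) : ℝ :=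
  (n.choose k : ℝ) * p ^ k * (1 - p) ^ (n - k)

/-- P(Bin(n,p) ≤ x). -/
noncomputable def binCDF (n : ℕ) (p x : ℝ) : ℝ :=
  ∑ k ∈ Finset.range (n + 1), if (k : ℝ) ≤ x then binPMF n k p else 0

/-- Binary entropy in bits. -/
noncomputable def binH (x : ℝ) : ℝ :=
  -x * Real.logb 2 x - (1 - x) * Real.logb 2 (1 - x)

/-- klB in terms of binH. -/
lemma klB_eq {p x : ℝ} (hx : 0 ≤ x) (hp : 0 < p) (hx1 : x < 1) (hp1 : p < 1) :
    klB x p = -binH x - x * Real.logb 2 p - (1 - x) * Real.logb 2 (1 - p) := by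
  unfold klB binH
  have h1 : x * Real.logb 2 (x / p) = x * Real.logb 2 x - x * Real.logb 2 p := by
    rcases eq_or_lt_of_le hx with h | h
    · simp [← h]
    · rw [Real.logb_div (ne_of_gt h) (ne_of_gt hp)]; ring
  have h2 : (1 - x) * Real.logb 2 ((1 - x) / (1 - p))
      = (1 - x) * Real.logb 2 (1 - x) - (1 - x) * Real.logb 2 (1 - p) := by
    rw [Real.logb_div (by linarith) (by linarith)]; ring
  rw [h1, h2]; ring

/-- Subadditivity of x ↦ -(x log x). -/
lemma f_subadd {x d : ℝ} (hx : 0 ≤ x) (hd : 0 ≤ d) :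
    -((x + d) * Real.log (x + d)) ≤ -(x * Real.log x) + -(d * Real.log d) := by
  have h1 : x * Real.log x ≤ x * Real.log (x + d) := by
    rcases eq_or_lt_of_le hx with h | h
    · simp [← h]
    · exact mul_le_mul_of_nonneg_left (Real.log_le_log h (by linarith)) hx
  have h2 : d * Real.log d ≤ d * Real.log (x + d) := by
    rcases eq_or_lt_of_le hd with h | h
    · simp [← h]
    · exact mul_le_mul_of_nonneg_left (Real.log_le_log h (by linarith)) hd
  nlinarith [h1, h2]

/-- Near-monotonicity: for 0 ≤ x ≤ y with log y ≤ -1, -(x log x) ≤ -(y log y). -/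
lemma f_mono {x y : ℝ} (hx : 0 ≤ x) (hxy : x ≤ y) (hy : Real.log y ≤ -1) :
    -(x * Real.log x) ≤ -(y * Real.log y) := by
  have hy0 : 0 < y := by
    rcases (le_trans hx hxy).lt_or_eq with h | h
    · exact h
    · exfalso; rw [← h, Real.log_zero] at hy; linarith
  rcases eq_or_lt_of_le hx with h | h
  · have hyl : y * Real.log y ≤ y * (-1) := mul_le_mul_of_nonneg_left hy hy0.le
    have e0 : -(x * Real.log x) = 0 := by rw [← h]; ring
    rw [e0]; nlinarith
  · have l1 : Real.log (y / x) ≤ y / x - 1 := Real.log_le_sub_one_of_pos (by positivity)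
    have e1 : Real.log (y / x) = Real.log y - Real.log x := Real.log_div (ne_of_gt hy0) (ne_of_gt h)
    have l2 : x * Real.log (y / x) ≤ y - x := by
      have := mul_le_mul_of_nonneg_left l1 hx
      have e2 : x * (y / x - 1) = y - x := by field_simp
      linarith [e2 ▸ this]
    rw [e1] at l2
    nlinarith [mul_nonneg (sub_nonneg.mpr hxy) (by linarith : (0:ℝ) ≤ -Real.log y - 1)]

/-- One-sided Lipschitz for g x = -((1-x) log (1-x)): g a - g ta ≤ a - ta. -/
lemma g_lip {ta a : ℝ} (h1 : ta ≤ a) (ha : a < 1) (h0 : 0 ≤ ta) :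
    -((1 - a) * Real.log (1 - a)) - -((1 - ta) * Real.log (1 - ta)) ≤ a - ta := by
  set s : ℝ := 1 - a with hs
  set d : ℝ := a - ta with hd
  have hs0 : 0 < s := by simp [hs]; linarith
  have hd0 : 0 ≤ d := by simp [hd]; linarith
  have hsd1 : s + d ≤ 1 := by simp [hs, hd]; linarith
  have e0 : 1 - ta = s + d := by rw [hs, hd]; ring
  rw [e0]
  -- goal: -(s log s) - -((s+d) log (s+d)) ≤ d
  have l1 : Real.log ((s + d) / s) ≤ (s + d) / s - 1 := Real.log_le_sub_one_of_pos (by positivity)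
  have e1 : Real.log ((s + d) / s) = Real.log (s + d) - Real.log s :=
    Real.log_div (by positivity) (ne_of_gt hs0)
  have l2 : s * (Real.log (s + d) - Real.log s) ≤ d := by
    have := mul_le_mul_of_nonneg_left l1 hs0.le
    have e2 : s * ((s + d) / s - 1) = d := by field_simp; ring
    rw [e1, e2] at this; linarith
  have l3 : Real.log (s + d) ≤ 0 := Real.log_nonpos (by linarith) hsd1
  nlinarith [mul_nonpos_of_nonneg_of_nonpos hd0 l3]

/-- Natural-log binary entropy is at most log 2. -/
lemma nH_le_log2 {x : ℝ} (hx : 0 ≤ x) (hx1 : x ≤ 1) :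
    -(x * Real.log x) + -((1 - x) * Real.log (1 - x)) ≤ Real.log 2 := by
  have hlog2 : (0:ℝ) < Real.log 2 := Real.log_pos one_lt_two
  rcases eq_or_lt_of_le hx with h | h
  · simp [← h]; linarith
  rcases eq_or_lt_of_le hx1 with h' | h'
  · simp [h']; linarith
  have hx1' : (1:ℝ) - x ≠ 0 := by linarith
  have hx1'' : (0:ℝ) < 1 - x := by linarith
  have l1 : Real.log (1 / (2 * x)) ≤ 1 / (2 * x) - 1 := Real.log_le_sub_one_of_pos (by positivity)
  have e1 : Real.log (1 / (2 * x)) = -(Real.log 2) - Real.log x := by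
    rw [one_div, Real.log_inv, Real.log_mul two_ne_zero (ne_of_gt h)]; ring
  have l2 : Real.log (1 / (2 * (1 - x))) ≤ 1 / (2 * (1 - x)) - 1 :=
    Real.log_le_sub_one_of_pos (by positivity)
  have e2 : Real.log (1 / (2 * (1 - x))) = -(Real.log 2) - Real.log (1 - x) := by
    rw [one_div, Real.log_inv, Real.log_mul two_ne_zero (by linarith)]; ring
  rw [e1] at l1; rw [e2] at l2
  have m1 : x * (-(Real.log 2) - Real.log x) ≤ x * (1 / (2 * x) - 1) :=
    mul_le_mul_of_nonneg_left l1 hx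
  have m2 : (1 - x) * (-(Real.log 2) - Real.log (1 - x)) ≤ (1 - x) * (1 / (2 * (1 - x)) - 1) :=
    mul_le_mul_of_nonneg_left l2 (by linarith)
  have e3 : x * (1 / (2 * x) - 1) = 1 / 2 - x := by field_simp
  have e4 : (1 - x) * (1 / (2 * (1 - x)) - 1) = 1 / 2 - (1 - x) := by
    field_simp
  rw [e3] at m1; rw [e4] at m2
  nlinarith

lemma nH_nonneg {x : ℝ} (hx : 0 ≤ x) (hx1 : x ≤ 1) :
    0 ≤ -(x * Real.log x) + -((1 - x) * Real.log (1 - x)) := by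
  have t1 : x * Real.log x ≤ 0 := mul_nonpos_of_nonneg_of_nonpos hx (Real.log_nonpos hx hx1)
  have t2 : (1 - x) * Real.log (1 - x) ≤ 0 :=
    mul_nonpos_of_nonneg_of_nonpos (by linarith) (Real.log_nonpos (by linarith) (by linarith))
  linarith

theorem kl_rounding (n : ℕ) (p a ta : ℝ) (hn : 2 ≤ n) (hp : 0 < p) (hp1 : p < 1)
    (h0 : 0 ≤ ta) (h1 : ta ≤ a) (h2 : a ≤ p) (h3 : a - ta ≤ 1 / n) :
    klB ta p - klB a p
      ≤ (1 / n) * max 0 (Real.logb 2 (p / (1 - p))) + (2 / n) * Real.logb 2 n := by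
  have hn0 : (0:ℝ) < n := by positivity
  have hn2 : (2:ℝ) ≤ n := by exact_mod_cast hn
  have ha1 : a < 1 := lt_of_le_of_lt h2 hp1
  have hta1 : ta < 1 := lt_of_le_of_lt h1 ha1
  have ha0 : 0 ≤ a := le_trans h0 h1
  have hδ0 : 0 ≤ a - ta := by linarith
  have hlog2 : (0:ℝ) < Real.log 2 := Real.log_pos one_lt_two
  -- identity
  have key : klB ta p - klB a p
      = (binH a - binH ta) + (a - ta) * Real.logb 2 (p / (1 - p)) := by
    rw [klB_eq h0 hp hta1 hp1, klB_eq ha0 hp ha1 hp1,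
      Real.logb_div (ne_of_gt hp) (by linarith)]
    ring
  rw [key]
  have stepA : (a - ta) * Real.logb 2 (p / (1 - p))
      ≤ (1 / n) * max 0 (Real.logb 2 (p / (1 - p))) := by
    rcases le_or_gt 0 (Real.logb 2 (p / (1 - p))) with hc | hc
    · rw [max_eq_right hc]
      exact mul_le_mul_of_nonneg_right h3 hc
    · rw [max_eq_left hc.le]
      rw [mul_zero]
      exact mul_nonpos_of_nonneg_of_nonpos hδ0 hc.le
  have stepB : binH a - binH ta ≤ (2 / n) * Real.logb 2 n := by
    -- convert to natural logs
    have conv : ∀ x : ℝ, binH x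
        = (-(x * Real.log x) + -((1 - x) * Real.log (1 - x))) / Real.log 2 := by
      intro x; unfold binH; rw [Real.logb, Real.logb]; ring
    rw [conv, conv, div_sub_div_same, Real.logb,
      show (2:ℝ) / (n:ℝ) * (Real.log n / Real.log 2) = (2 / (n:ℝ) * Real.log n) / Real.log 2
        from by ring,
      div_le_div_iff_of_pos_right hlog2]
    -- goal in natural logs
    set HA := -(a * Real.log a) + -((1 - a) * Real.log (1 - a)) with hHA
    set HT := -(ta * Real.log ta) + -((1 - ta) * Real.log (1 - ta)) with hHT
    show HA - HT ≤ 2 / n * Real.log n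
    rcases eq_or_lt_of_le hn with hn2' | hn3
    · -- n = 2
      have hA : HA ≤ Real.log 2 := nH_le_log2 ha0 ha1.le
      have hT : 0 ≤ HT := nH_nonneg h0 hta1.le
      have hne : (n:ℝ) = 2 := by exact_mod_cast hn2'.symm
      rw [hne]
      norm_num
      linarith
    · -- n ≥ 3
      have hn3' : (3:ℝ) ≤ n := by exact_mod_cast hn3
      have hlogn : 1 ≤ Real.log n := by
        have he : Real.exp 1 ≤ 3 := by
          have := Real.exp_one_lt_d9
          linarith
        calc 1 = Real.log (Real.exp 1) := (Real.log_exp 1).symm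
          _ ≤ Real.log n := Real.log_le_log (Real.exp_pos 1) (by linarith)
      -- f part
      have hfsub : -(a * Real.log a) ≤ -(ta * Real.log ta) + -((a - ta) * Real.log (a - ta)) := by
        have := f_subadd h0 hδ0
        have e : ta + (a - ta) = a := by ring
        rw [e] at this; exact this
      have hfδ : -((a - ta) * Real.log (a - ta)) ≤ -((1 / n) * Real.log (1 / n)) := by
        apply f_mono hδ0 h3
        rw [one_div, Real.log_inv]
        linarith
      have hfval : -((1 / n) * Real.log (1 / n)) = (1 / n) * Real.log n := by
        rw [one_div, Real.log_inv]; ring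
      -- g part
      have hg : -((1 - a) * Real.log (1 - a)) - -((1 - ta) * Real.log (1 - ta)) ≤ a - ta :=
        g_lip h1 ha1 h0
      have hδn : a - ta ≤ (1 / n) * Real.log n := by
        calc a - ta ≤ 1 / n := h3
          _ = (1 / n) * 1 := by ring
          _ ≤ (1 / n) * Real.log n := by
            apply mul_le_mul_of_nonneg_left hlogn (by positivity)
      have : HA - HT ≤ (1 / n) * Real.log n + (1 / n) * Real.log n := by
        rw [hHA, hHT]
        have := hfval ▸ hfδ
        linarith
      have e5 : (1 / (n:ℝ)) * Real.log n + (1 / (n:ℝ)) * Real.log n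
          = 2 / (n:ℝ) * Real.log n := by ring
      linarith [this, e5.le, e5.ge]
  linarith
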